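/- Let (A, 𝔪, k) be a commutative Noetherian local ring, let M be a finitely generated A-module having free reducible complexity, and let 0 → K → F → M → 0 be an exact sequence of finitely generated A-modules in which F is free. Then K also has free reducible complexity; in particular, every syzygy Ω^i_A(M), i ≥ 0, has free reducible complexity. -/

import Mathlib

open CategoryTheory Opposite Filter IsLocalRing

universe u

namespace ComplexityTest

variable (A : Type u) [CommRing A] [IsLocalRing A]

structure MinFreeRes (M : Type u) [AddCommGroup M] [Module A M] : Type u where
  b : ℕ → ℕ
  d : (n : ℕ) → ((Fin (b (n + 1)) → A) →ₗ[A] (Fin (b n) → A))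
  aug : (Fin (b 0) → A) →ₗ[A] M
  aug_surjective : Function.Surjective aug
  exact_zero : Function.Exact (d 0) aug
  exact_succ : ∀ n, Function.Exact (d (n + 1)) (d n)
  minimal : ∀ n x i, d n x i ∈ maximalIdeal A

variable (M : Type u) [AddCommGroup M] [Module A M]

def HasComplexityLE (t : ℕ) : Prop :=
  ∃ (R : MinFreeRes A M) (a : ℝ), ∀ᶠ n : ℕ in atTop, (R.b n : ℝ) ≤ a * (n : ℝ) ^ ((t : ℤ) - 1)

noncomputable def complexity : ℕ∞ :=
  sInf {c : ℕ∞ | ∃ t : ℕ, c = t ∧ HasComplexityLE A M t}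

def HasProjDimLE (t : ℕ) : Prop :=
  ∃ R : MinFreeRes A M, ∀ i, t < i → R.b i = 0

noncomputable def projDim : ℕ∞ :=
  sInf {c : ℕ∞ | ∃ t : ℕ, c = t ∧ HasProjDimLE A M t}

def HasFiniteProjDim : Prop :=
  ∃ t : ℕ, HasProjDimLE A M t

def IsSyzygyOf (S : Type u) [AddCommGroup S] [Module A S] : ℕ → Prop
  | 0 => Nonempty (S ≃ₗ[A] M)
  | 1 => ∃ R : MinFreeRes A M, Nonempty (S ≃ₗ[A] (LinearMap.ker R.aug))
  | (n + 2) => ∃ R : MinFreeRes A M, Nonempty (S ≃ₗ[A] (LinearMap.ker (R.d n)))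

variable {A M} in
def IsSES {K S : Type u} [AddCommGroup K] [Module A K] [AddCommGroup S] [Module A S]
    (f : M →ₗ[A] K) (g : K →ₗ[A] S) : Prop :=
  Function.Injective f ∧ Function.Exact f g ∧ Function.Surjective g

noncomputable def extModule (n : ℕ) (N : Type u) [AddCommGroup N] [Module A N] :
    ModuleCat A :=
  ((_root_.Ext A (ModuleCat.{u} A) n).obj (op (ModuleCat.of A M))).obj (ModuleCat.of A N)

def extVanish (n : ℕ) (N : Type u) [AddCommGroup N] [Module A N] : Prop :=
  Subsingleton (extModule A M n N)

/-- The `n`-th Tor module `Tor^A_n(M, N)`. -/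
noncomputable def torModule (n : ℕ) (N : Type u) [AddCommGroup N] [Module A N] :
    ModuleCat A :=
  ((Tor (ModuleCat.{u} A) n).obj (ModuleCat.of A M)).obj (ModuleCat.of A N)

/-- The vanishing `Tor^A_n(M, N) = 0`. -/
def torVanish (n : ℕ) (N : Type u) [AddCommGroup N] [Module A N] : Prop :=
  Subsingleton (torModule A M n N)

noncomputable def depth : ℕ∞ :=
  sInf {c : ℕ∞ | ∃ i : ℕ, c = i ∧ ¬ extVanish A (ResidueField A) i M}

variable {A}

/-- The category of modules of *free reducible complexity* over the local ring `A`.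
It is defined inductively: every finitely generated module of finite projective
dimension has free reducible complexity, and a finitely generated module `M` of finite
positive complexity has free reducible complexity provided there is a short exact
sequence `0 → M → K → Ω^n_A(M) → 0` (necessarily induced by a cohomology element
`η ∈ Ext^{n+1}_A(M,M)`) where `K` is a finitely generated module of free reducible
complexity with `cx K = cx M - 1`. -/
inductive HasFreeRedCxCat : ModuleCat.{u} A → Prop
  | of_finite_projDim (M : ModuleCat.{u} A) (hfg : Module.Finite A M)
      (h : HasFiniteProjDim A M) : HasFreeRedCxCat M
  | step (M K S : ModuleCat.{u} A) (n : ℕ)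
      (hfg : Module.Finite A M) (hKfg : Module.Finite A K)
      (hpos : 0 < complexity A M) (hfin : complexity A M ≠ ⊤)
      (hsyz : IsSyzygyOf A M S n)
      (f : M →ₗ[A] K) (g : K →ₗ[A] S) (hses : IsSES f g)
      (hcx : complexity A K = complexity A M - 1)
      (hK : HasFreeRedCxCat K) : HasFreeRedCxCat M

/-- The category of modules of *reducible complexity* over the local ring `A`: as for
free reducible complexity, but where in addition the reductions are required to
preserve depth. -/
inductive HasRedCxCat : ModuleCat.{u} A → Prop
  | of_finite_projDim (M : ModuleCat.{u} A) (hfg : Module.Finite A M)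
      (h : HasFiniteProjDim A M) : HasRedCxCat M
  | step (M K S : ModuleCat.{u} A) (n : ℕ)
      (hfg : Module.Finite A M) (hKfg : Module.Finite A K)
      (hpos : 0 < complexity A M) (hfin : complexity A M ≠ ⊤)
      (hsyz : IsSyzygyOf A M S n)
      (f : M →ₗ[A] K) (g : K →ₗ[A] S) (hses : IsSES f g)
      (hcx : complexity A K = complexity A M - 1)
      (hdepth : depth A K = depth A M)
      (hK : HasRedCxCat K) : HasRedCxCat M

variable (A)

/-- `M` has free reducible complexity. -/
def HasFreeRedCx (M : Type u) [AddCommGroup M] [Module A M] : Prop :=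
  HasFreeRedCxCat (ModuleCat.of A M)

/-- `M` has reducible complexity. -/
def HasRedCx (M : Type u) [AddCommGroup M] [Module A M] : Prop :=
  HasRedCxCat (ModuleCat.of A M)

/-- A Noetherian local ring is Gorenstein if it has finite injective dimension over
itself; by Bass' characterization, this is equivalent to the vanishing of
`Ext^i_A(k, A)` for all sufficiently large `i`. -/
def IsGorenstein : Prop :=
  ∃ n : ℕ, ∀ i : ℕ, n < i → extVanish A (ResidueField A) i A

end ComplexityTest

open ComplexityTest


namespace ComplexityTest

variable {A : Type u} [CommRing A] [IsLocalRing A]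


lemma mem_mSmulTop_iff {n : ℕ} (x : Fin n → A) :
    x ∈ (maximalIdeal A • ⊤ : Submodule A (Fin n → A)) ↔ ∀ i, x i ∈ maximalIdeal A := by
  constructor
  · intro hx
    refine Submodule.smul_induction_on hx (fun r hr m _ => fun i => ?_)
      (fun a b ha hb i => (maximalIdeal A).add_mem (ha i) (hb i))
    exact Ideal.mul_mem_right _ _ hr
  · intro h
    classical
    rw [pi_eq_sum_univ x]
    exact Submodule.sum_mem _ fun i _ =>
      Submodule.smul_mem_smul (h i) trivial

lemma nakayama {N : Type u} [AddCommGroup N] [Module A N] [Module.Finite A N]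
    (W : Submodule A N) (h : W ⊔ (maximalIdeal A • ⊤) = ⊤) : W = ⊤ :=
  top_le_iff.mp <| Submodule.le_of_le_smul_of_le_jacobson_bot Module.Finite.fg_top
    (by rw [IsLocalRing.jacobson_eq_maximalIdeal (⊥ : Ideal A) bot_ne_top])
    h.ge

lemma exists_min_cover (N : Type u) [AddCommGroup N] [Module A N] [Module.Finite A N] :
    ∃ (b : ℕ) (π : (Fin b → A) →ₗ[A] N), Function.Surjective π ∧
      ∀ x ∈ LinearMap.ker π, ∀ i, x i ∈ maximalIdeal A := by
  classical
  obtain ⟨n, s, hs⟩ := Module.Finite.exists_fin (R := A) (M := N)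
  have hπ₀ : Function.Surjective (Fintype.linearCombination A s) := by
    rw [← LinearMap.range_eq_top, Fintype.range_linearCombination, hs]
  suffices H : ∀ b : ℕ, ∀ π : (Fin b → A) →ₗ[A] N, Function.Surjective π →
      ∃ (b' : ℕ) (π' : (Fin b' → A) →ₗ[A] N), Function.Surjective π' ∧
        ∀ x ∈ LinearMap.ker π', ∀ i, x i ∈ maximalIdeal A from
    H n _ hπ₀
  intro b
  induction b using Nat.strong_induction_on with
  | _ b IH =>
    intro π hπ
    by_cases hmin : ∀ x ∈ LinearMap.ker π, ∀ i, x i ∈ maximalIdeal A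
    · exact ⟨b, π, hπ, hmin⟩
    · push_neg at hmin
      obtain ⟨x, hx, i, hxi⟩ := hmin
      obtain ⟨m, rfl⟩ := Nat.exists_eq_succ_of_ne_zero i.pos.ne'
      have hu : IsUnit (x i) := by
        by_contra hc
        exact hxi (IsLocalRing.mem_maximalIdeal _ |>.mpr hc)
      set g : Fin (m + 1) → N := fun j => π (fun j' => if j = j' then 1 else 0) with hg
      have hsum : ∀ y : Fin (m + 1) → A, π y = ∑ j, y j • g j := by
        intro y
        conv_lhs => rw [pi_eq_sum_univ y]
        rw [map_sum]
        simp [g, map_smul]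
      have h0 : x i • g i + ∑ j ∈ Finset.univ.erase i, x j • g j = 0 := by
        rw [Finset.add_sum_erase Finset.univ (fun j => x j • g j) (Finset.mem_univ i),
          ← hsum, LinearMap.mem_ker.mp hx]
      set s' : Fin m → N := fun k => g (i.succAbove k) with hs'
      have hsub : ∀ j : Fin (m + 1), j ≠ i → g j ∈ Submodule.span A (Set.range s') := by
        intro j hj
        obtain ⟨k, hk⟩ := Fin.exists_succAbove_eq hj
        exact hk ▸ Submodule.subset_span ⟨k, rfl⟩
      have hgi : g i ∈ Submodule.span A (Set.range s') := by
        obtain ⟨u, hu⟩ := hu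
        have h1 : x i • g i = -∑ j ∈ Finset.univ.erase i, x j • g j :=
          eq_neg_of_add_eq_zero_left h0
        have h2 : g i = (↑u⁻¹ : A) • (x i • g i) := by
          rw [smul_smul, ← hu, Units.inv_mul, one_smul]
        rw [h2, h1]
        refine Submodule.smul_mem _ _ (neg_mem (Submodule.sum_mem _ fun j hj => ?_))
        exact Submodule.smul_mem _ _ (hsub j (Finset.mem_erase.mp hj).1)
      have hspan' : Submodule.span A (Set.range s') = ⊤ := by
        rw [eq_top_iff]
        intro y _
        obtain ⟨z, rfl⟩ := hπ y
        rw [hsum]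
        refine Submodule.sum_mem _ fun j _ => Submodule.smul_mem _ _ ?_
        by_cases hj : j = i
        · exact hj ▸ hgi
        · exact hsub j hj
      have hsurj' : Function.Surjective (Fintype.linearCombination A s') := by
        rw [← LinearMap.range_eq_top, Fintype.range_linearCombination, hspan']
      exact IH m (Nat.lt_succ_self m) _ hsurj'



section Existence

structure FinMod (A : Type u) [CommRing A] [IsLocalRing A] : Type (u + 1) where
  carrier : Type u
  [isAddCommGroup : AddCommGroup carrier]
  [isModule : Module A carrier]
  [isFinite : Module.Finite A carrier]

attribute [instance] FinMod.isAddCommGroup FinMod.isModule FinMod.isFinite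

noncomputable def coverNum (N : FinMod A) : ℕ := (exists_min_cover (A := A) N.carrier).choose

noncomputable def coverMap (N : FinMod A) :
    (Fin (coverNum N) → A) →ₗ[A] N.carrier :=
  (exists_min_cover (A := A) N.carrier).choose_spec.choose

lemma coverMap_surjective (N : FinMod A) : Function.Surjective (coverMap N) :=
  (exists_min_cover (A := A) N.carrier).choose_spec.choose_spec.1

lemma coverMap_ker (N : FinMod A) :
    ∀ x ∈ LinearMap.ker (coverMap N), ∀ i, x i ∈ maximalIdeal A :=
  (exists_min_cover (A := A) N.carrier).choose_spec.choose_spec.2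

variable [IsNoetherianRing A]

noncomputable def nextMod (N : FinMod A) : FinMod A :=
  { carrier := LinearMap.ker (coverMap N),
    isFinite := Module.Finite.iff_fg.mpr (IsNoetherian.noetherian _) }

noncomputable def iterMod (N : FinMod A) (n : ℕ) : FinMod A :=
  Nat.rec N (fun _ s => nextMod s) n

variable (A) in
noncomputable def minFreeRes (N : Type u) [AddCommGroup N] [Module A N]
    [Module.Finite A N] : MinFreeRes A N where
  b n := coverNum (iterMod ⟨N⟩ n)
  d n := (LinearMap.ker (coverMap (iterMod ⟨N⟩ n))).subtype.comp
    (coverMap (iterMod ⟨N⟩ (n + 1)))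
  aug := coverMap (iterMod ⟨N⟩ 0)
  aug_surjective := coverMap_surjective _
  exact_zero := by
    intro y
    constructor
    · intro hy
      obtain ⟨x, hx⟩ := coverMap_surjective (iterMod ⟨N⟩ 1) ⟨y, hy⟩
      exact ⟨x, congrArg Subtype.val hx⟩
    · rintro ⟨x, rfl⟩
      exact (coverMap (iterMod ⟨N⟩ 1) x).property
  exact_succ n := by
    intro y
    constructor
    · intro hy
      obtain ⟨x, hx⟩ := coverMap_surjective (iterMod ⟨N⟩ (n + 2))
        ⟨y, Subtype.ext hy⟩
      exact ⟨x, congrArg Subtype.val hx⟩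
    · rintro ⟨x, rfl⟩
      exact congrArg Subtype.val (coverMap (iterMod ⟨N⟩ (n + 2)) x).property
  minimal n x i :=
    coverMap_ker (iterMod ⟨N⟩ n) _ (coverMap (iterMod ⟨N⟩ (n + 1)) x).property i

end Existence


section Uniqueness

variable {M : Type u} [AddCommGroup M] [Module A M]

lemma map_eq_of_map_le [IsNoetherianRing A] {E : Type u} [AddCommGroup E] [Module A E]
    [Module.Finite A E] (χ : E →ₗ[A] E) (hs : Function.Surjective χ) (W : Submodule A E)
    (hW : W.map χ ≤ W) : W.map χ = W := by
  haveI : IsNoetherian A E := isNoetherian_of_isNoetherianRing_of_finite A E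
  let U : ℕ → Submodule A E := fun n => Nat.rec W (fun _ V => V.comap χ) n
  have hUs : ∀ n, U (n + 1) = (U n).comap χ := fun n => rfl
  have hle : ∀ n, U n ≤ U (n + 1) := by
    intro n
    induction n with
    | zero => exact Submodule.map_le_iff_le_comap.mp hW
    | succ k ih =>
        rw [hUs (k + 1), hUs k]
        exact Submodule.comap_mono (hUs k ▸ ih)
  have hmono : Monotone U := monotone_nat_of_le_succ hle
  obtain ⟨n, hn⟩ := (monotone_stabilizes_iff_noetherian.mpr inferInstance) ⟨U, hmono⟩
  have hstab : U n = U (n + 1) := hn (n + 1) (Nat.le_succ n)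
  have hmapU : ∀ k, (U (k + 1)).map χ = U k := fun k => by
    rw [hUs, Submodule.map_comap_eq_of_surjective hs]
  have hfix : (U n).map χ = U n := by
    conv_lhs => rw [hstab]
    rw [hmapU n]
  have hiter : ∀ k, (fun V : Submodule A E => V.map χ)^[k] (U k) = W := by
    intro k
    induction k with
    | zero => rfl
    | succ k ih =>
        rw [Function.iterate_succ_apply, hmapU k, ih]
  have hfixiter : ∀ k, (fun V : Submodule A E => V.map χ)^[k] (U n) = U n := by
    intro k
    induction k with
    | zero => rfl
    | succ k ih => rw [Function.iterate_succ_apply, hfix, ih]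
  have hWU : W = U n := by rw [← hiter n, hfixiter n]
  rw [hWU, hfix]

lemma ker_d_le (R : MinFreeRes A M) (n : ℕ) (x : Fin (R.b (n + 1)) → A)
    (hx : R.d n x = 0) : ∀ i, x i ∈ maximalIdeal A := by
  obtain ⟨z, hz⟩ := (R.exact_succ n x).mp hx
  exact fun i => hz ▸ R.minimal (n + 1) z i

lemma ker_aug_le (R : MinFreeRes A M) (x : Fin (R.b 0) → A)
    (hx : R.aug x = 0) : ∀ i, x i ∈ maximalIdeal A := by
  obtain ⟨z, hz⟩ := (R.exact_zero x).mp hx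
  exact fun i => hz ▸ R.minimal 0 z i

lemma selfLift_surjective [IsNoetherianRing A] (R : MinFreeRes A M)
    (χ : ∀ n, (Fin (R.b n) → A) →ₗ[A] (Fin (R.b n) → A))
    (h0 : R.aug.comp (χ 0) = R.aug)
    (hc : ∀ n, (R.d n).comp (χ (n + 1)) = (χ n).comp (R.d n)) :
    ∀ n, Function.Surjective (χ n) := by
  intro n
  induction n with
  | zero =>
      rw [← LinearMap.range_eq_top]
      refine nakayama _ (top_le_iff.mp ?_)
      intro y _
      have hy : y - χ 0 y ∈ LinearMap.ker R.aug := by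
        rw [LinearMap.mem_ker, map_sub, ← LinearMap.comp_apply, h0, sub_self]
      have : y = χ 0 y + (y - χ 0 y) := by abel
      rw [this]
      refine Submodule.add_mem_sup (LinearMap.mem_range_self _ _) ?_
      rw [mem_mSmulTop_iff]
      exact ker_aug_le R _ hy
  | succ n ih =>
      have hst : (LinearMap.range (R.d n)).map (χ n) ≤ LinearMap.range (R.d n) := by
        rintro _ ⟨_, ⟨x, rfl⟩, rfl⟩
        exact ⟨χ (n + 1) x, by rw [← LinearMap.comp_apply, hc n]; rfl⟩
      have heq := map_eq_of_map_le (χ n) ih _ hst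
      rw [← LinearMap.range_eq_top]
      refine nakayama _ (top_le_iff.mp ?_)
      intro y _
      have : R.d n y ∈ (LinearMap.range (R.d n)).map (χ n) := by
        rw [heq]; exact LinearMap.mem_range_self _ _
      obtain ⟨w, ⟨z, rfl⟩, hw⟩ := this
      have hz : R.d n (χ (n + 1) z) = R.d n y := by
        rw [← hw, ← LinearMap.comp_apply, hc n]; rfl
      have hy : y - χ (n + 1) z ∈ LinearMap.ker (R.d n) := by
        rw [LinearMap.mem_ker, map_sub, hz, sub_self]
      have hyy : y = χ (n + 1) z + (y - χ (n + 1) z) := by abel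
      rw [hyy]
      refine Submodule.add_mem_sup (LinearMap.mem_range_self _ _) ?_
      rw [mem_mSmulTop_iff]
      exact ker_d_le R n _ hy

noncomputable def liftZero (R R' : MinFreeRes A M) :
    {φ : (Fin (R.b 0) → A) →ₗ[A] (Fin (R'.b 0) → A) // R'.aug.comp φ = R.aug} :=
  let e := Module.projective_lifting_property R'.aug R.aug R'.aug_surjective
  ⟨e.choose, e.choose_spec⟩

noncomputable def liftStep (R R' : MinFreeRes A M) (n : ℕ)
    (φ : (Fin (R.b n) → A) →ₗ[A] (Fin (R'.b n) → A))
    (h : ∀ x, φ (R.d n x) ∈ LinearMap.range (R'.d n)) :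
    { ψ : (Fin (R.b (n + 1)) → A) →ₗ[A] (Fin (R'.b (n + 1)) → A) //
      (R'.d n).comp ψ = φ.comp (R.d n) } :=
  let e := Module.projective_lifting_property ((R'.d n).rangeRestrict)
      (LinearMap.codRestrict (LinearMap.range (R'.d n)) (φ.comp (R.d n))
        (fun x => h x)) (R'.d n).surjective_rangeRestrict
  ⟨e.choose, by
    refine LinearMap.ext fun x => ?_
    have h1 : (R'.d n).rangeRestrict (e.choose x)
        = LinearMap.codRestrict (LinearMap.range (R'.d n)) (φ.comp (R.d n))
          (fun x => h x) x := by
      rw [← LinearMap.comp_apply, e.choose_spec]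
    have h2 := congrArg Subtype.val h1
    simpa [LinearMap.codRestrict_apply, LinearMap.rangeRestrict,
      LinearMap.comp_apply] using h2⟩

noncomputable def liftSeq (R R' : MinFreeRes A M) :
    (n : ℕ) → {φ : (Fin (R.b n) → A) →ₗ[A] (Fin (R'.b n) → A) //
      ∀ x, φ (R.d n x) ∈ LinearMap.range (R'.d n)}
  | 0 => ⟨(liftZero R R').1, fun x => by
      have h0 : R'.aug ((liftZero R R').1 (R.d 0 x)) = 0 := by
        have h := congrFun (congrArg DFunLike.coe (liftZero R R').2) (R.d 0 x)
        simp only [LinearMap.comp_apply] at h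
        rw [h, (R.exact_zero).apply_apply_eq_zero]
      exact LinearMap.mem_range.mpr ((R'.exact_zero _).mp h0)⟩
  | (n + 1) =>
      let prev := liftSeq R R' n
      let s := liftStep R R' n prev.1 prev.2
      ⟨s.1, fun x => by
        have h := congrFun (congrArg DFunLike.coe s.2) (R.d (n + 1) x)
        simp only [LinearMap.comp_apply] at h
        rw [(R.exact_succ n).apply_apply_eq_zero, map_zero] at h
        exact LinearMap.mem_range.mpr ((R'.exact_succ n _).mp h)⟩

lemma liftSeq_zero (R R' : MinFreeRes A M) :
    R'.aug.comp (liftSeq R R' 0).1 = R.aug :=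
  (liftZero R R').2

lemma liftSeq_comm (R R' : MinFreeRes A M) (n : ℕ) :
    (R'.d n).comp (liftSeq R R' (n + 1)).1 = (liftSeq R R' n).1.comp (R.d n) :=
  (liftStep R R' n (liftSeq R R' n).1 (liftSeq R R' n).2).2

lemma betti_eq [IsNoetherianRing A] (R R' : MinFreeRes A M) (n : ℕ) : R.b n = R'.b n := by
  classical
  set φ := fun n => (liftSeq R R' n).1 with hφ
  set ψ := fun n => (liftSeq R' R n).1 with hψ
  have hχ0 : R.aug.comp ((ψ 0).comp (φ 0)) = R.aug := by
    rw [← LinearMap.comp_assoc, liftSeq_zero R' R, liftSeq_zero R R']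
  have hχc : ∀ k, (R.d k).comp ((ψ (k + 1)).comp (φ (k + 1)))
      = ((ψ k).comp (φ k)).comp (R.d k) := by
    intro k
    rw [← LinearMap.comp_assoc, liftSeq_comm R' R k, LinearMap.comp_assoc,
      liftSeq_comm R R' k, ← LinearMap.comp_assoc]
  have hχ'0 : R'.aug.comp ((φ 0).comp (ψ 0)) = R'.aug := by
    rw [← LinearMap.comp_assoc, liftSeq_zero R R', liftSeq_zero R' R]
  have hχ'c : ∀ k, (R'.d k).comp ((φ (k + 1)).comp (ψ (k + 1)))
      = ((φ k).comp (ψ k)).comp (R'.d k) := by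
    intro k
    rw [← LinearMap.comp_assoc, liftSeq_comm R R' k, LinearMap.comp_assoc,
      liftSeq_comm R' R k, ← LinearMap.comp_assoc]
  have hs : Function.Surjective ((ψ n).comp (φ n)) :=
    selfLift_surjective R (fun k => (ψ k).comp (φ k)) hχ0 hχc n
  have hs' : Function.Surjective ((φ n).comp (ψ n)) :=
    selfLift_surjective R' (fun k => (φ k).comp (ψ k)) hχ'0 hχ'c n
  have hinj : Function.Injective ((ψ n).comp (φ n)) :=
    OrzechProperty.injective_of_surjective_endomorphism _ hs
  have hφsurj : Function.Surjective (φ n) := by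
    have := hs'
    rw [LinearMap.coe_comp] at this
    exact Function.Surjective.of_comp this
  have hφinj : Function.Injective (φ n) := by
    have := hinj
    rw [LinearMap.coe_comp] at this
    exact Function.Injective.of_comp this
  have e : (Fin (R.b n) → A) ≃ₗ[A] (Fin (R'.b n) → A) :=
    LinearEquiv.ofBijective (φ n) ⟨hφinj, hφsurj⟩
  have := e.finrank_eq
  simpa [Module.finrank_pi] using this

end Uniqueness


section Splitting

variable {M : Type u} [AddCommGroup M] [Module A M]

lemma free_equiv_fin (F : Type u) [AddCommGroup F] [Module A F] [Module.Finite A F]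
    [Module.Free A F] : ∃ c : ℕ, Nonempty (F ≃ₗ[A] (Fin c → A)) := by
  let b := Module.Free.chooseBasis A F
  let e0 := Fintype.equivFin (Module.Free.ChooseBasisIndex A F)
  exact ⟨Fintype.card (Module.Free.ChooseBasisIndex A F),
    ⟨(b.reindex e0).equivFun⟩⟩

lemma splitting [IsNoetherianRing A] (R : MinFreeRes A M) {K F : Type u}
    [AddCommGroup K] [Module A K] [AddCommGroup F] [Module A F]
    [Module.Finite A F] [Module.Free A F]
    (f : K →ₗ[A] F) (g : F →ₗ[A] M) (hses : IsSES f g) :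
    ∃ c : ℕ, Nonempty (K ≃ₗ[A] ((LinearMap.ker R.aug) × (Fin c → A))) := by
  obtain ⟨hfinj, hex, hgsurj⟩ := hses
  obtain ⟨α, hα⟩ := Module.projective_lifting_property R.aug g R.aug_surjective
  have hαsurj : Function.Surjective α := by
    rw [← LinearMap.range_eq_top]
    refine nakayama _ (top_le_iff.mp ?_)
    intro y _
    obtain ⟨x, hx⟩ := hgsurj (R.aug y)
    have h1 : y - α x ∈ LinearMap.ker R.aug := by
      rw [LinearMap.mem_ker, map_sub, ← hx, ← hα]
      simp [LinearMap.comp_apply]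
    have h2 : y = α x + (y - α x) := by abel
    rw [h2]
    refine Submodule.add_mem_sup (LinearMap.mem_range_self _ _) ?_
    rw [mem_mSmulTop_iff]
    exact ker_aug_le R _ h1
  obtain ⟨s, hsec⟩ := Module.projective_lifting_property α LinearMap.id hαsurj
  have hsec' : ∀ y, α (s y) = y := fun y =>
    congrFun (congrArg DFunLike.coe hsec) y
  have haf : ∀ k, R.aug (α (f k)) = 0 := by
    intro k
    have : g (f k) = 0 := hex.apply_apply_eq_zero k
    rw [← hα] at this
    exact this
  have hker : ∀ k, α (f k - s (α (f k))) = 0 := by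
    intro k
    rw [map_sub, hsec', sub_self]
  let m1 : K →ₗ[A] LinearMap.ker R.aug :=
    LinearMap.codRestrict _ (α.comp f) haf
  let m2 : K →ₗ[A] LinearMap.ker α :=
    LinearMap.codRestrict _ (f - s.comp (α.comp f)) hker
  let τ : K →ₗ[A] (LinearMap.ker R.aug × LinearMap.ker α) := m1.prod m2
  have hτbij : Function.Bijective τ := by
    constructor
    · intro k k' hk
      have h1 : α (f k) = α (f k') := congrArg Subtype.val (congrArg Prod.fst hk)
      have h2 : f k - s (α (f k)) = f k' - s (α (f k')) :=
        congrArg Subtype.val (congrArg Prod.snd hk)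
      rw [h1, sub_left_inj] at h2
      exact hfinj h2
    · rintro ⟨⟨y, hy⟩, ⟨z, hz⟩⟩
      have hw : g (s y + z) = 0 := by
        rw [← hα]
        show R.aug (α (s y + z)) = 0
        rw [map_add, hsec', LinearMap.mem_ker.mp hz, map_add, LinearMap.mem_ker.mp hy,
          map_zero, add_zero]
      obtain ⟨k, hk⟩ := (hex (s y + z)).mp hw
      refine ⟨k, ?_⟩
      have hαfk : α (f k) = y := by rw [hk, map_add, hsec', LinearMap.mem_ker.mp hz, add_zero]
      refine Prod.ext (Subtype.ext ?_) (Subtype.ext ?_)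
      · exact hαfk
      · show f k - s (α (f k)) = z
        rw [hαfk, hk]
        abel
  -- ker α is free of finite rank
  haveI : Module.Finite A (LinearMap.ker α) :=
    Module.Finite.iff_fg.mpr (IsNoetherian.noetherian _)
  have hproj : Module.Projective A (LinearMap.ker α) := by
    refine Module.Projective.of_split (LinearMap.ker α).subtype
      (LinearMap.codRestrict _ (LinearMap.id - s.comp α) ?_) ?_
    · intro x
      show α (x - s (α x)) = 0
      rw [map_sub, hsec', sub_self]
    · refine LinearMap.ext fun x => Subtype.ext ?_
      show (x : F) - s (α x) = x
      rw [LinearMap.mem_ker.mp x.2, map_zero, sub_zero]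
  haveI := hproj
  haveI : Module.Free A (LinearMap.ker α) := by
    haveI : Module.FinitePresentation A (LinearMap.ker α) :=
      Module.finitePresentation_of_projective A _
    exact Module.free_of_flat_of_isLocalRing (R := A) (P := LinearMap.ker α)
  obtain ⟨c, ⟨e2⟩⟩ := free_equiv_fin (A := A) (LinearMap.ker α)
  exact ⟨c, ⟨(LinearEquiv.ofBijective τ hτbij).trans
    ((LinearEquiv.refl A _).prodCongr e2)⟩⟩

end Splitting


section Shift

variable {M : Type u} [AddCommGroup M] [Module A M]

noncomputable def prodFinEquiv (m c : ℕ) :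
    (Fin (m + c) → A) ≃ₗ[A] ((Fin m → A) × (Fin c → A)) :=
  (LinearEquiv.funCongrLeft A A finSumFinEquiv).trans
    (LinearEquiv.sumArrowLequivProdArrow (Fin m) (Fin c) A A)

lemma prodFinEquiv_symm_apply (m c : ℕ) (u : Fin m → A) (v : Fin c → A) (i : Fin (m + c)) :
    (prodFinEquiv (A := A) m c).symm (u, v) i = Sum.elim u v (finSumFinEquiv.symm i) := rfl

noncomputable def kerAugRestrict (R : MinFreeRes A M) :
    (Fin (R.b 1) → A) →ₗ[A] LinearMap.ker R.aug :=
  LinearMap.codRestrict _ (R.d 0)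
    (fun x => LinearMap.mem_ker.mpr ((R.exact_zero).apply_apply_eq_zero x))

lemma kerAugRestrict_surjective (R : MinFreeRes A M) :
    Function.Surjective (kerAugRestrict R) := by
  rintro ⟨y, hy⟩
  obtain ⟨x, hx⟩ := (R.exact_zero y).mp (LinearMap.mem_ker.mp hy)
  exact ⟨x, Subtype.ext hx⟩

lemma kerAugRestrict_eq_zero_iff (R : MinFreeRes A M) (x : Fin (R.b 1) → A) :
    kerAugRestrict R x = 0 ↔ R.d 0 x = 0 :=
  ⟨fun h => congrArg Subtype.val h, fun h => Subtype.ext h⟩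

noncomputable def shiftRes (R : MinFreeRes A M) (c : ℕ) {K : Type u} [AddCommGroup K]
    [Module A K] (e : K ≃ₗ[A] ((LinearMap.ker R.aug) × (Fin c → A))) : MinFreeRes A K where
  b n := match n with
    | 0 => R.b 1 + c
    | (n + 1) => R.b (n + 2)
  d n := match n with
    | 0 => (prodFinEquiv (R.b 1) c).symm.toLinearMap.comp
        ((LinearMap.inl A (Fin (R.b 1) → A) (Fin c → A)).comp (R.d 1))
    | (n + 1) => R.d (n + 2)
  aug := e.symm.toLinearMap.comp
    (((kerAugRestrict R).prodMap (LinearMap.id : (Fin c → A) →ₗ[A] (Fin c → A))).comp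
      (prodFinEquiv (R.b 1) c).toLinearMap)
  aug_surjective := by
    intro k
    obtain ⟨x, hx⟩ := kerAugRestrict_surjective R (e k).1
    refine ⟨(prodFinEquiv (A := A) (R.b 1) c).symm (x, (e k).2), ?_⟩
    show e.symm (((kerAugRestrict R).prodMap LinearMap.id)
      ((prodFinEquiv (A := A) (R.b 1) c)
        ((prodFinEquiv (A := A) (R.b 1) c).symm (x, (e k).2)))) = k
    rw [LinearEquiv.apply_symm_apply]
    have h2 : ((kerAugRestrict R).prodMap
        (LinearMap.id : (Fin c → A) →ₗ[A] (Fin c → A))) (x, (e k).2)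
        = ((e k).1, (e k).2) := by
      rw [LinearMap.prodMap_apply, hx]; rfl
    rw [h2]
    simp
  exact_zero := by
    intro y
    simp only [LinearMap.comp_apply, LinearEquiv.coe_coe, LinearMap.prodMap_apply,
      LinearMap.id_coe, id_eq, LinearMap.inl_apply, LinearEquiv.map_eq_zero_iff,
      Prod.mk_eq_zero, kerAugRestrict_eq_zero_iff, Set.mem_range]
    constructor
    · rintro ⟨h1, h2⟩
      obtain ⟨x, hx⟩ := (R.exact_succ 0 _).mp h1
      refine ⟨x, ?_⟩
      have : ((R.d 1 x : Fin (R.b 1) → A), (0 : Fin c → A))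
          = (prodFinEquiv (A := A) (R.b 1) c) y := by
        rw [hx, ← h2]
      rw [this, LinearEquiv.symm_apply_apply]
    · rintro ⟨x, rfl⟩
      rw [LinearEquiv.apply_symm_apply]
      exact ⟨(R.exact_succ 0).apply_apply_eq_zero x, rfl⟩
  exact_succ := by
    intro n
    match n with
    | 0 =>
      intro y
      simp only [LinearMap.comp_apply, LinearEquiv.coe_coe, LinearMap.inl_apply,
        LinearEquiv.map_eq_zero_iff, Prod.mk_eq_zero, Set.mem_range]
      constructor
      · rintro ⟨h1, _⟩
        exact (R.exact_succ 1 y).mp h1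
      · rintro ⟨x, rfl⟩
        exact ⟨(R.exact_succ 1).apply_apply_eq_zero x, trivial⟩
    | (n + 1) => exact R.exact_succ (n + 2)
  minimal := by
    intro n
    match n with
    | 0 =>
      intro x i
      show (prodFinEquiv (A := A) (R.b 1) c).symm (R.d 1 x, 0) i ∈ maximalIdeal A
      rw [prodFinEquiv_symm_apply]
      rcases finSumFinEquiv.symm i with j | j
      · exact R.minimal 1 x j
      · exact zero_mem _
    | (n + 1) => exact R.minimal (n + 2)

lemma shiftRes_b_zero (R : MinFreeRes A M) (c : ℕ) {K : Type u} [AddCommGroup K]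
    [Module A K] (e : K ≃ₗ[A] ((LinearMap.ker R.aug) × (Fin c → A))) :
    (shiftRes R c e).b 0 = R.b 1 + c := rfl

lemma shiftRes_b_succ (R : MinFreeRes A M) (c : ℕ) {K : Type u} [AddCommGroup K]
    [Module A K] (e : K ≃ₗ[A] ((LinearMap.ker R.aug) × (Fin c → A))) (n : ℕ) :
    (shiftRes R c e).b (n + 1) = R.b (n + 2) := rfl

lemma shiftRes_ker_aug (R : MinFreeRes A M) (c : ℕ) {K : Type u} [AddCommGroup K]
    [Module A K] (e : K ≃ₗ[A] ((LinearMap.ker R.aug) × (Fin c → A))) :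
    Nonempty ((LinearMap.ker (R.d 0)) ≃ₗ[A] LinearMap.ker (shiftRes R c e).aug) := by
  refine ⟨LinearEquiv.ofBijective (LinearMap.codRestrict _
    (((prodFinEquiv (A := A) (R.b 1) c).symm.toLinearMap.comp
      (LinearMap.inl A (Fin (R.b 1) → A) (Fin c → A))).comp (LinearMap.ker (R.d 0)).subtype)
    ?_) ⟨?_, ?_⟩⟩
  · rintro ⟨x, hx⟩
    show (shiftRes R c e).aug ((prodFinEquiv (A := A) (R.b 1) c).symm (x, 0)) = 0
    show e.symm (((kerAugRestrict R).prodMap LinearMap.id)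
      ((prodFinEquiv (A := A) (R.b 1) c) ((prodFinEquiv (A := A) (R.b 1) c).symm (x, 0)))) = 0
    rw [LinearEquiv.apply_symm_apply, LinearEquiv.map_eq_zero_iff]
    refine Prod.ext ?_ rfl
    exact (kerAugRestrict_eq_zero_iff R x).mpr (LinearMap.mem_ker.mp hx)
  · intro a b hab
    have h1 := congrArg Subtype.val hab
    change (prodFinEquiv (A := A) (R.b 1) c).symm ((a : Fin (R.b 1) → A), 0)
      = (prodFinEquiv (A := A) (R.b 1) c).symm ((b : Fin (R.b 1) → A), 0) at h1
    have h2 := congrArg (prodFinEquiv (A := A) (R.b 1) c) h1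
    rw [LinearEquiv.apply_symm_apply, LinearEquiv.apply_symm_apply] at h2
    exact Subtype.ext (congrArg Prod.fst h2)
  · rintro ⟨y, hy⟩
    have hy' : (shiftRes R c e).aug y = 0 := LinearMap.mem_ker.mp hy
    have hy2 : e.symm (((kerAugRestrict R).prodMap LinearMap.id)
        ((prodFinEquiv (A := A) (R.b 1) c) y)) = 0 := hy'
    rw [LinearEquiv.map_eq_zero_iff] at hy2
    have h1 : kerAugRestrict R ((prodFinEquiv (A := A) (R.b 1) c) y).1 = 0 :=
      congrArg Prod.fst hy2
    have h2 : ((prodFinEquiv (A := A) (R.b 1) c) y).2 = 0 := congrArg Prod.snd hy2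
    rw [kerAugRestrict_eq_zero_iff] at h1
    refine ⟨⟨((prodFinEquiv (A := A) (R.b 1) c) y).1, LinearMap.mem_ker.mpr h1⟩,
      Subtype.ext ?_⟩
    show (prodFinEquiv (A := A) (R.b 1) c).symm (((prodFinEquiv (A := A) (R.b 1) c) y).1, 0) = y
    rw [← h2]
    exact (prodFinEquiv (A := A) (R.b 1) c).symm_apply_apply y
  
lemma shiftRes_ker_d_zero (R : MinFreeRes A M) (c : ℕ) {K : Type u} [AddCommGroup K]
    [Module A K] (e : K ≃ₗ[A] ((LinearMap.ker R.aug) × (Fin c → A))) :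
    LinearMap.ker ((shiftRes R c e).d 0) = LinearMap.ker (R.d 1) := by
  ext x
  simp only [LinearMap.mem_ker]
  show (prodFinEquiv (A := A) (R.b 1) c).symm ((R.d 1 x, 0)) = 0 ↔ R.d 1 x = 0
  rw [LinearEquiv.map_eq_zero_iff, Prod.mk_eq_zero]
  exact ⟨fun h => h.1, fun h => ⟨h, rfl⟩⟩

lemma shiftRes_ker_d_succ (R : MinFreeRes A M) (c : ℕ) {K : Type u} [AddCommGroup K]
    [Module A K] (e : K ≃ₗ[A] ((LinearMap.ker R.aug) × (Fin c → A))) (n : ℕ) :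
    LinearMap.ker ((shiftRes R c e).d (n + 1)) = LinearMap.ker (R.d (n + 2)) := rfl

end Shift


section Growth

lemma zpow_succ_bound (t n : ℕ) (hn : 1 ≤ n) :
    ((n + 1 : ℕ) : ℝ) ^ ((t : ℤ) - 1) ≤ 2 ^ (t + 1) * ((n : ℕ) : ℝ) ^ ((t : ℤ) - 1) := by
  have hn0 : (0 : ℝ) < (n : ℝ) := by exact_mod_cast hn
  rcases Nat.eq_zero_or_pos t with rfl | ht
  · rw [show ((0 : ℕ) : ℤ) - 1 = -1 by norm_num, zpow_neg_one, zpow_neg_one]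
    have h1 : ((n : ℝ))⁻¹ ≤ 2 ^ (0 + 1) * (n : ℝ)⁻¹ := by
      nlinarith [inv_nonneg.mpr hn0.le]
    refine le_trans ?_ h1
    refine inv_anti₀ hn0 ?_
    push_cast; linarith
  · obtain ⟨k, rfl⟩ := Nat.exists_eq_add_of_le ht
    rw [show ((1 + k : ℕ) : ℤ) - 1 = (k : ℤ) by push_cast; ring, zpow_natCast, zpow_natCast]
    have hn1 : (1 : ℝ) ≤ (n : ℝ) := by exact_mod_cast hn
    have h1 : ((n + 1 : ℕ) : ℝ) ^ k ≤ (2 * (n : ℝ)) ^ k := by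
      refine pow_le_pow_left₀ (by positivity) ?_ k
      push_cast; linarith
    refine h1.trans ?_
    rw [mul_pow]
    have h2 : (2 : ℝ) ^ k ≤ 2 ^ (1 + k + 1) :=
      pow_le_pow_right₀ (by norm_num) (by omega)
    nlinarith [pow_nonneg hn0.le k, pow_nonneg (by norm_num : (0:ℝ) ≤ 2) k]

lemma zpow_pred_bound (t n : ℕ) (hn : 2 ≤ n) :
    ((n - 1 : ℕ) : ℝ) ^ ((t : ℤ) - 1) ≤ 2 ^ (t + 1) * ((n : ℕ) : ℝ) ^ ((t : ℤ) - 1) := by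
  have hn0 : (0 : ℝ) < (n : ℝ) := by exact_mod_cast (by omega : 0 < n)
  have hm0 : (0 : ℝ) < ((n - 1 : ℕ) : ℝ) := by exact_mod_cast (by omega : 0 < n - 1)
  have hcast : ((n - 1 : ℕ) : ℝ) = (n : ℝ) - 1 := by
    push_cast [Nat.cast_sub (by omega : 1 ≤ n)]; ring
  rcases Nat.eq_zero_or_pos t with rfl | ht
  · rw [show ((0 : ℕ) : ℤ) - 1 = -1 by norm_num, zpow_neg_one, zpow_neg_one,
      inv_eq_one_div, inv_eq_one_div,
      show (2:ℝ) ^ (0 + 1) * (1 / (n : ℝ)) = 2 / (n : ℝ) by ring,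
      div_le_div_iff₀ hm0 hn0]
    rw [hcast]
    have : (2 : ℝ) ≤ (n : ℝ) := by exact_mod_cast hn
    nlinarith
  · obtain ⟨k, rfl⟩ := Nat.exists_eq_add_of_le ht
    rw [show ((1 + k : ℕ) : ℤ) - 1 = (k : ℤ) by push_cast; ring, zpow_natCast, zpow_natCast]
    have h1 : ((n - 1 : ℕ) : ℝ) ^ k ≤ (n : ℝ) ^ k := by
      refine pow_le_pow_left₀ hm0.le ?_ k
      rw [hcast]; linarith
    refine h1.trans ?_
    have h2 : (1 : ℝ) ≤ 2 ^ (1 + k + 1) := by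
      have := pow_le_pow_right₀ (by norm_num : (1:ℝ) ≤ 2) (Nat.zero_le (1 + k + 1))
      simpa using this
    nlinarith [pow_nonneg hn0.le k]

lemma growth_succ {t : ℕ} {a : ℝ} {b : ℕ → ℕ}
    (h : ∀ᶠ n : ℕ in atTop, (b n : ℝ) ≤ a * (n : ℝ) ^ ((t : ℤ) - 1)) :
    ∃ a' : ℝ, ∀ᶠ n : ℕ in atTop, (b (n + 1) : ℝ) ≤ a' * (n : ℝ) ^ ((t : ℤ) - 1) := by
  refine ⟨max a 0 * 2 ^ (t + 1), ?_⟩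
  obtain ⟨N, hN⟩ := eventually_atTop.mp h
  rw [eventually_atTop]
  refine ⟨max N 1, fun n hn => ?_⟩
  have hN' : N ≤ n + 1 := by
    have := le_trans (le_max_left N 1) hn; omega
  have hn1 : 1 ≤ n := le_trans (le_max_right N 1) hn
  have h1 : (b (n + 1) : ℝ) ≤ a * ((n + 1 : ℕ) : ℝ) ^ ((t : ℤ) - 1) := hN (n + 1) hN'
  have hpos : (0 : ℝ) ≤ ((n + 1 : ℕ) : ℝ) ^ ((t : ℤ) - 1) := by positivity
  have hpos2 : (0 : ℝ) ≤ ((n : ℕ) : ℝ) ^ ((t : ℤ) - 1) := by positivity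
  calc (b (n + 1) : ℝ) ≤ a * ((n + 1 : ℕ) : ℝ) ^ ((t : ℤ) - 1) := h1
    _ ≤ max a 0 * ((n + 1 : ℕ) : ℝ) ^ ((t : ℤ) - 1) :=
        mul_le_mul_of_nonneg_right (le_max_left a 0) hpos
    _ ≤ max a 0 * (2 ^ (t + 1) * ((n : ℕ) : ℝ) ^ ((t : ℤ) - 1)) :=
        mul_le_mul_of_nonneg_left (zpow_succ_bound t n hn1) (le_max_right a 0)
    _ = max a 0 * 2 ^ (t + 1) * ((n : ℕ) : ℝ) ^ ((t : ℤ) - 1) := by ring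

lemma growth_pred {t : ℕ} {a : ℝ} {b : ℕ → ℕ}
    (h : ∀ᶠ n : ℕ in atTop, (b n : ℝ) ≤ a * (n : ℝ) ^ ((t : ℤ) - 1)) :
    ∃ a' : ℝ, ∀ᶠ n : ℕ in atTop, (b (n - 1) : ℝ) ≤ a' * (n : ℝ) ^ ((t : ℤ) - 1) := by
  refine ⟨max a 0 * 2 ^ (t + 1), ?_⟩
  obtain ⟨N, hN⟩ := eventually_atTop.mp h
  rw [eventually_atTop]
  refine ⟨max (N + 1) 2, fun n hn => ?_⟩
  have hN' : N ≤ n - 1 := by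
    have := le_trans (le_max_left (N + 1) 2) hn; omega
  have hn2 : 2 ≤ n := le_trans (le_max_right (N + 1) 2) hn
  have h1 : (b (n - 1) : ℝ) ≤ a * ((n - 1 : ℕ) : ℝ) ^ ((t : ℤ) - 1) := hN (n - 1) hN'
  have hpos : (0 : ℝ) ≤ ((n - 1 : ℕ) : ℝ) ^ ((t : ℤ) - 1) := by positivity
  have hpos2 : (0 : ℝ) ≤ ((n : ℕ) : ℝ) ^ ((t : ℤ) - 1) := by positivity
  calc (b (n - 1) : ℝ) ≤ a * ((n - 1 : ℕ) : ℝ) ^ ((t : ℤ) - 1) := h1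
    _ ≤ max a 0 * ((n - 1 : ℕ) : ℝ) ^ ((t : ℤ) - 1) :=
        mul_le_mul_of_nonneg_right (le_max_left a 0) hpos
    _ ≤ max a 0 * (2 ^ (t + 1) * ((n : ℕ) : ℝ) ^ ((t : ℤ) - 1)) :=
        mul_le_mul_of_nonneg_left (zpow_pred_bound t n hn2) (le_max_right a 0)
    _ = max a 0 * 2 ^ (t + 1) * ((n : ℕ) : ℝ) ^ ((t : ℤ) - 1) := by ring

end Growth


section Transfer

variable {M K F : Type u} [AddCommGroup M] [Module A M] [AddCommGroup K] [Module A K]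
  [AddCommGroup F] [Module A F]

lemma hasComplexityLE_ker [IsNoetherianRing A] [Module.Finite A F] [Module.Free A F]
    (f : K →ₗ[A] F) (g : F →ₗ[A] M) (hses : IsSES f g) (t : ℕ)
    (h : HasComplexityLE A M t) : HasComplexityLE A K t := by
  obtain ⟨R, a, ha⟩ := h
  obtain ⟨c, ⟨e⟩⟩ := splitting R f g hses
  obtain ⟨a', ha'⟩ := growth_succ (b := R.b) (a := a) ha
  refine ⟨shiftRes R c e, a', ?_⟩
  filter_upwards [ha', eventually_ge_atTop 1] with n hn hn1
  rcases n with _ | m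
  · exact absurd hn1 (by norm_num)
  · exact hn

lemma hasComplexityLE_of_ker [IsNoetherianRing A] [Module.Finite A M] [Module.Finite A F]
    [Module.Free A F]
    (f : K →ₗ[A] F) (g : F →ₗ[A] M) (hses : IsSES f g) (t : ℕ)
    (h : HasComplexityLE A K t) : HasComplexityLE A M t := by
  obtain ⟨RK, a, ha⟩ := h
  set R := minFreeRes A M with hR
  obtain ⟨c, ⟨e⟩⟩ := splitting R f g hses
  have hb : ∀ n, R.b (n + 2) = RK.b (n + 1) := fun n => betti_eq (shiftRes R c e) RK (n + 1)
  obtain ⟨a', ha'⟩ := growth_pred (b := RK.b) (a := a) ha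
  refine ⟨R, a', ?_⟩
  filter_upwards [ha', eventually_ge_atTop 2] with n hn hn2
  rcases n with _ | m
  · exact absurd hn2 (by norm_num)
  · rcases m with _ | m
    · exact absurd hn2 (by norm_num)
    · rw [show R.b (m + 2) = RK.b (m + 1) from hb m]
      exact hn

lemma hasProjDimLE_ker [IsNoetherianRing A] [Module.Finite A F] [Module.Free A F]
    (f : K →ₗ[A] F) (g : F →ₗ[A] M) (hses : IsSES f g) (t : ℕ)
    (h : HasProjDimLE A M t) : HasProjDimLE A K t := by
  obtain ⟨R, hR⟩ := h
  obtain ⟨c, ⟨e⟩⟩ := splitting R f g hses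
  refine ⟨shiftRes R c e, fun i hi => ?_⟩
  rcases i with _ | m
  · omega
  · exact hR (m + 2) (by omega)

lemma complexity_ker_eq [IsNoetherianRing A] [Module.Finite A M] [Module.Finite A F]
    [Module.Free A F]
    (f : K →ₗ[A] F) (g : F →ₗ[A] M) (hses : IsSES f g) :
    complexity A K = complexity A M := by
  unfold complexity
  congr 1
  ext x
  simp only [Set.mem_setOf_eq]
  constructor
  · rintro ⟨t, rfl, ht⟩
    exact ⟨t, rfl, hasComplexityLE_of_ker f g hses t ht⟩
  · rintro ⟨t, rfl, ht⟩
    exact ⟨t, rfl, hasComplexityLE_ker f g hses t ht⟩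

end Transfer

section Congr

variable {M M' : Type u} [AddCommGroup M] [Module A M] [AddCommGroup M'] [Module A M']

def MinFreeRes.congr (R : MinFreeRes A M) (e : M ≃ₗ[A] M') : MinFreeRes A M' where
  b := R.b
  d := R.d
  aug := e.toLinearMap.comp R.aug
  aug_surjective := e.surjective.comp R.aug_surjective
  exact_zero := by
    intro y
    show e (R.aug y) = 0 ↔ _
    rw [LinearEquiv.map_eq_zero_iff]
    exact R.exact_zero y
  exact_succ := R.exact_succ
  minimal := R.minimal

lemma MinFreeRes.congr_ker_aug (R : MinFreeRes A M) (e : M ≃ₗ[A] M') :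
    LinearMap.ker (R.congr e).aug = LinearMap.ker R.aug := by
  ext x
  show e (R.aug x) = 0 ↔ R.aug x = 0
  rw [LinearEquiv.map_eq_zero_iff]

lemma hasComplexityLE_congr (e : M ≃ₗ[A] M') (t : ℕ) (h : HasComplexityLE A M t) :
    HasComplexityLE A M' t := by
  obtain ⟨R, a, ha⟩ := h
  exact ⟨R.congr e, a, ha⟩

lemma complexity_congr (e : M ≃ₗ[A] M') : complexity A M = complexity A M' := by
  unfold complexity
  congr 1
  ext x
  simp only [Set.mem_setOf_eq]
  constructor
  · rintro ⟨t, rfl, ht⟩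
    exact ⟨t, rfl, hasComplexityLE_congr e t ht⟩
  · rintro ⟨t, rfl, ht⟩
    exact ⟨t, rfl, hasComplexityLE_congr e.symm t ht⟩

lemma hasProjDimLE_congr (e : M ≃ₗ[A] M') (t : ℕ) (h : HasProjDimLE A M t) :
    HasProjDimLE A M' t := by
  obtain ⟨R, hR⟩ := h
  exact ⟨R.congr e, hR⟩

lemma hasFiniteProjDim_congr (e : M ≃ₗ[A] M') (h : HasFiniteProjDim A M) :
    HasFiniteProjDim A M' := by
  obtain ⟨t, ht⟩ := h
  exact ⟨t, hasProjDimLE_congr e t ht⟩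

lemma isSyzygyOf_congr (e : M ≃ₗ[A] M') (S : Type u) [AddCommGroup S] [Module A S]
    (n : ℕ) (h : IsSyzygyOf A M S n) : IsSyzygyOf A M' S n := by
  match n with
  | 0 =>
    obtain ⟨e2⟩ := h
    exact ⟨e2.trans e⟩
  | 1 =>
    obtain ⟨R, ⟨e2⟩⟩ := h
    exact ⟨R.congr e, ⟨e2.trans (LinearEquiv.ofEq _ _ (R.congr_ker_aug e).symm)⟩⟩
  | (n + 2) =>
    obtain ⟨R, ⟨e2⟩⟩ := h
    exact ⟨R.congr e, ⟨e2⟩⟩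

end Congr


section StepCase

variable {M : Type u} [AddCommGroup M] [Module A M]

noncomputable def kerDRestrict (R : MinFreeRes A M) (m : ℕ) :
    (Fin (R.b (m + 2)) → A) →ₗ[A] LinearMap.ker (R.d m) :=
  LinearMap.codRestrict _ (R.d (m + 1))
    (fun x => LinearMap.mem_ker.mpr ((R.exact_succ m).apply_apply_eq_zero x))

lemma kerDRestrict_surjective (R : MinFreeRes A M) (m : ℕ) :
    Function.Surjective (kerDRestrict R m) := by
  rintro ⟨y, hy⟩
  obtain ⟨x, hx⟩ := (R.exact_succ m y).mp (LinearMap.mem_ker.mp hy)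
  exact ⟨x, Subtype.ext hx⟩

lemma ker_kerDRestrict (R : MinFreeRes A M) (m : ℕ) :
    LinearMap.ker (kerDRestrict R m) = LinearMap.ker (R.d (m + 1)) := by
  ext x
  exact ⟨fun h => congrArg Subtype.val h, fun h => Subtype.ext h⟩

lemma ker_kerAugRestrict (R : MinFreeRes A M) :
    LinearMap.ker (kerAugRestrict R) = LinearMap.ker (R.d 0) := by
  ext x
  exact ⟨fun h => congrArg Subtype.val h, fun h => Subtype.ext h⟩

lemma shiftRes_ker_d (R : MinFreeRes A M) (c : ℕ) {K : Type u} [AddCommGroup K]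
    [Module A K] (e : K ≃ₗ[A] ((LinearMap.ker R.aug) × (Fin c → A))) (m : ℕ) :
    LinearMap.ker ((shiftRes R c e).d m) = LinearMap.ker (R.d (m + 1)) := by
  rcases m with _ | m
  · exact shiftRes_ker_d_zero R c e
  · exact shiftRes_ker_d_succ R c e m

lemma isSES_subtype_of_surjective {E T : Type u} [AddCommGroup E] [Module A E]
    [AddCommGroup T] [Module A T] (p : E →ₗ[A] T) (hp : Function.Surjective p) :
    IsSES ((LinearMap.ker p).subtype) p := by
  refine ⟨Subtype.val_injective, fun y => ?_, hp⟩
  constructor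
  · intro hy
    exact ⟨⟨y, LinearMap.mem_ker.mpr hy⟩, rfl⟩
  · rintro ⟨⟨x, hx⟩, rfl⟩
    exact LinearMap.mem_ker.mp hx

lemma step_case [IsNoetherianRing A] {MM Kη S T : Type u}
    [AddCommGroup MM] [Module A MM] [Module.Finite A MM]
    [AddCommGroup Kη] [Module A Kη] [Module.Finite A Kη]
    [AddCommGroup S] [Module A S] [AddCommGroup T] [Module A T]
    (fM : MM →ₗ[A] Kη) (gM : Kη →ₗ[A] S) (hsesM : IsSES fM gM)
    {K F : Type u} [AddCommGroup K] [Module A K] [Module.Finite A K]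
    [AddCommGroup F] [Module A F] [Module.Finite A F] [Module.Free A F]
    (f : K →ₗ[A] F) (g : F →ₗ[A] MM) (hses : IsSES f g)
    {G : Type u} [AddCommGroup G] [Module A G] [Module.Finite A G] [Module.Free A G]
    (q0 : G →ₗ[A] T) (eS : S ≃ₗ[A] T) (hq0 : Function.Surjective q0)
    (n : ℕ) (hsyzn : IsSyzygyOf A K (LinearMap.ker q0) n)
    (hpos : 0 < complexity A MM) (hfin : complexity A MM ≠ ⊤)
    (hcx : complexity A Kη = complexity A MM - 1)
    (ih : ∀ (K' F' : Type u) [AddCommGroup K'] [Module A K'] [Module.Finite A K']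
      [AddCommGroup F'] [Module A F'] [Module.Finite A F'] [Module.Free A F']
      (f' : K' →ₗ[A] F') (g' : F' →ₗ[A] Kη), IsSES f' g' → HasFreeRedCx A K') :
    HasFreeRedCx A K := by
  classical
  -- the lift of the cover of S through gM
  set q : G →ₗ[A] S := eS.symm.toLinearMap.comp q0 with hq
  have hqsurj : Function.Surjective q := eS.symm.surjective.comp hq0
  obtain ⟨lift, hlift⟩ := Module.projective_lifting_property gM q hsesM.2.2
  have hlift' : ∀ y, gM (lift y) = q y := fun y =>
    congrFun (congrArg DFunLike.coe hlift) y
  -- the cover of Kη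
  set h : (F × G) →ₗ[A] Kη := (fM.comp g).coprod lift with hh
  have happly : ∀ x y, h (x, y) = fM (g x) + lift y := fun x y => rfl
  have hsurj : Function.Surjective h := by
    intro z
    obtain ⟨y, hy⟩ := hqsurj (gM z)
    have hz1 : gM (z - lift y) = 0 := by
      rw [map_sub, hlift', hy, sub_self]
    obtain ⟨m, hm⟩ := (hsesM.2.1 _).mp hz1
    obtain ⟨x, hx⟩ := hses.2.2 m
    exact ⟨(x, y), by rw [happly, hx, hm]; abel⟩
  haveI : Module.Finite A (LinearMap.ker h) :=
    Module.Finite.iff_fg.mpr (IsNoetherian.noetherian _)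
  have hsesh : IsSES ((LinearMap.ker h).subtype) h := isSES_subtype_of_surjective h hsurj
  -- the maps of the new short exact sequence
  have hifk : ∀ k, h (f k, 0) = 0 := by
    intro k
    rw [happly, hses.2.1.apply_apply_eq_zero k, map_zero, map_zero, add_zero]
  set i : K →ₗ[A] LinearMap.ker h :=
    LinearMap.codRestrict _ ((LinearMap.inl A F G).comp f)
      (fun k => LinearMap.mem_ker.mpr (hifk k)) with hi
  have hπmem : ∀ z : LinearMap.ker h, q0 ((z : F × G).2) = 0 := by
    rintro ⟨⟨x, y⟩, hz⟩
    have h0 : gM (h (x, y)) = 0 := by rw [LinearMap.mem_ker.mp hz, map_zero]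
    rw [happly, map_add, hsesM.2.1.apply_apply_eq_zero, zero_add, hlift'] at h0
    have : eS.symm (q0 y) = 0 := h0
    rwa [LinearEquiv.map_eq_zero_iff] at this
  set π : LinearMap.ker h →ₗ[A] LinearMap.ker q0 :=
    LinearMap.codRestrict _ ((LinearMap.snd A F G).comp (LinearMap.ker h).subtype)
      (fun z => LinearMap.mem_ker.mpr (hπmem z)) with hπ
  have hsesiπ : IsSES i π := by
    refine ⟨?_, ?_, ?_⟩
    · intro k k' hk
      have h1 := congrArg Subtype.val hk
      have h2 : ((f k, 0) : F × G) = (f k', 0) := h1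
      exact hses.1 (congrArg Prod.fst h2)
    · rintro ⟨⟨x, y⟩, hz⟩
      constructor
      · intro hy
        have hy' : y = 0 := congrArg Subtype.val hy
        have hx0 : fM (g x) = 0 := by
          have h5 := LinearMap.mem_ker.mp hz
          rw [happly, hy', map_zero, add_zero] at h5
          exact h5
        have hgx : g x = 0 := by
          apply hsesM.1
          rw [hx0, map_zero]
        obtain ⟨k, hk⟩ := (hses.2.1 x).mp hgx
        exact ⟨k, Subtype.ext (by show ((f k, 0) : F × G) = (x, y); rw [hk, hy'])⟩
      · rintro ⟨k, hk⟩
        rw [← hk]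
        exact Subtype.ext rfl
    · rintro ⟨y, hy⟩
      have hq0y : q0 y = 0 := LinearMap.mem_ker.mp hy
      have hgl : gM (lift y) = 0 := by
        rw [hlift']
        show eS.symm (q0 y) = 0
        rw [hq0y, map_zero]
      obtain ⟨m, hm⟩ := (hsesM.2.1 _).mp hgl
      obtain ⟨x, hx⟩ := hses.2.2 m
      have hmem : (( -x, y) : F × G) ∈ LinearMap.ker h := by
        rw [LinearMap.mem_ker, happly, map_neg, hx, map_neg, hm]
        abel
      exact ⟨⟨(-x, y), hmem⟩, Subtype.ext rfl⟩
  -- complexity bookkeeping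
  have hKcx : complexity A K = complexity A MM := complexity_ker_eq f g hses
  have hK''cx : complexity A (LinearMap.ker h) = complexity A Kη :=
    complexity_ker_eq (LinearMap.ker h).subtype h hsesh
  have hK'' : HasFreeRedCx A (LinearMap.ker h) :=
    ih (LinearMap.ker h) (F × G) (LinearMap.ker h).subtype h hsesh
  exact HasFreeRedCxCat.step (ModuleCat.of A K) (ModuleCat.of A (LinearMap.ker h))
    (ModuleCat.of A (LinearMap.ker q0)) n ‹Module.Finite A K›
    ‹Module.Finite A (LinearMap.ker h)›
    (show (0 : ℕ∞) < complexity A K by rw [hKcx]; exact hpos)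
    (show complexity A K ≠ ⊤ by rw [hKcx]; exact hfin) hsyzn i π hsesiπ
    (show complexity A (LinearMap.ker h) = complexity A K - 1 by
      rw [hK''cx, hKcx]; exact hcx) hK''

end StepCase


section Main

lemma hasFreeRedCxCat_congr : ∀ (X : ModuleCat.{u} A), HasFreeRedCxCat X →
    ∀ {Y : Type u} [AddCommGroup Y] [Module A Y], (↥X ≃ₗ[A] Y) →
      HasFreeRedCxCat (ModuleCat.of A Y) := by
  intro X hX
  induction hX with
  | of_finite_projDim M hfg h =>
      intro Y _ _ e
      haveI := hfg
      exact .of_finite_projDim _ (Module.Finite.equiv e) (hasFiniteProjDim_congr e h)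
  | step M Kη S n hfg hKfg hpos hfin hsyz fM gM hsesM hcx hKη ih =>
      intro Y _ _ e
      haveI := hfg
      refine HasFreeRedCxCat.step (ModuleCat.of A Y) Kη S n (Module.Finite.equiv e) hKfg
        (show (0 : ℕ∞) < complexity A Y by rw [← complexity_congr e]; exact hpos)
        (show complexity A Y ≠ ⊤ by rw [← complexity_congr e]; exact hfin)
        (isSyzygyOf_congr e _ n hsyz)
        (fM.comp e.symm.toLinearMap) gM ⟨hsesM.1.comp e.symm.injective, ?_, hsesM.2.2⟩
        (show complexity A ↥Kη = complexity A Y - 1 by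
          rw [← complexity_congr e]; exact hcx) hKη
      intro z
      constructor
      · intro hz
        obtain ⟨m, hm⟩ := (hsesM.2.1 z).mp hz
        refine ⟨e m, ?_⟩
        show fM (e.symm (e m)) = z
        rw [LinearEquiv.symm_apply_apply, hm]
      · rintro ⟨y, rfl⟩
        exact hsesM.2.1.apply_apply_eq_zero (e.symm y)

lemma hasFreeRedCx_congr {N N' : Type u} [AddCommGroup N] [Module A N] [AddCommGroup N']
    [Module A N'] (e : N ≃ₗ[A] N') (h : HasFreeRedCx A N) : HasFreeRedCx A N' :=
  hasFreeRedCxCat_congr (ModuleCat.of A N) h e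

lemma hasFreeRedCx_of_ker [IsNoetherianRing A] (X : ModuleCat.{u} A)
    (hX : HasFreeRedCxCat X) :
    ∀ (K F : Type u) [AddCommGroup K] [Module A K] [Module.Finite A K]
      [AddCommGroup F] [Module A F] [Module.Finite A F] [Module.Free A F]
      (f : K →ₗ[A] F) (g : F →ₗ[A] ↥X), IsSES f g → HasFreeRedCx A K := by
  induction hX with
  | of_finite_projDim M hfg h =>
      intro K F _ _ _ _ _ _ _ f g hses
      obtain ⟨t, ht⟩ := h
      exact HasFreeRedCxCat.of_finite_projDim (ModuleCat.of A K) ‹Module.Finite A K›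
        ⟨t, hasProjDimLE_ker f g hses t ht⟩
  | step M Kη S n hfg hKfg hpos hfin hsyz fM gM hsesM hcx hKη ih =>
      intro K F _ _ _ _ _ _ _ f g hses
      haveI := hfg
      haveI := hKfg
      rcases n with _ | n
      · obtain ⟨eS⟩ := hsyz
        have hsyzn : IsSyzygyOf A K (LinearMap.ker g) 0 :=
          ⟨(LinearEquiv.ofEq _ _ (LinearMap.exact_iff.mp hses.2.1)).trans
            (LinearEquiv.ofInjective f hses.1).symm⟩
        exact step_case fM gM hsesM f g hses g eS hses.2.2 0 hsyzn hpos hfin hcx ih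
      · obtain ⟨c, ⟨e⟩⟩ := splitting (minFreeRes A ↥M) f g hses
        rcases n with _ | n
        · obtain ⟨R, ⟨eS⟩⟩ := hsyz
          obtain ⟨c', ⟨e'⟩⟩ := splitting R f g hses
          obtain ⟨eq2⟩ := shiftRes_ker_aug R c' e'
          have hsyzn : IsSyzygyOf A K (LinearMap.ker (kerAugRestrict R)) 1 :=
            ⟨shiftRes R c' e',
              ⟨(LinearEquiv.ofEq _ _ (ker_kerAugRestrict R)).trans eq2⟩⟩
          exact step_case fM gM hsesM f g hses (kerAugRestrict R) eS
            (kerAugRestrict_surjective R) 1 hsyzn hpos hfin hcx ih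
        · obtain ⟨R, ⟨eS⟩⟩ := hsyz
          obtain ⟨c', ⟨e'⟩⟩ := splitting R f g hses
          have hker : LinearMap.ker (kerDRestrict R n)
              = LinearMap.ker ((shiftRes R c' e').d n) := by
            rw [ker_kerDRestrict, shiftRes_ker_d]
          have hsyzn : IsSyzygyOf A K (LinearMap.ker (kerDRestrict R n)) (n + 2) :=
            ⟨shiftRes R c' e', ⟨LinearEquiv.ofEq _ _ hker⟩⟩
          exact step_case fM gM hsesM f g hses (kerDRestrict R n) eS
            (kerDRestrict_surjective R n) (n + 2) hsyzn hpos hfin hcx ih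

lemma frc_ker_d [IsNoetherianRing A] {M : Type u} [AddCommGroup M] [Module A M]
    [Module.Finite A M] (hM : HasFreeRedCx A M) (R : MinFreeRes A M) :
    ∀ n, HasFreeRedCx A (LinearMap.ker (R.d n)) := by
  have haux : ∀ (E : Type u) [AddCommGroup E] [Module A E],
      ∀ (p : (Fin (R.b 0) → A) →ₗ[A] E), True := fun _ _ _ _ => trivial
  have h1 : HasFreeRedCx A (LinearMap.ker R.aug) := by
    haveI : Module.Finite A (LinearMap.ker R.aug) :=
      Module.Finite.iff_fg.mpr (IsNoetherian.noetherian _)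
    exact hasFreeRedCx_of_ker (ModuleCat.of A M) hM _ _
      (LinearMap.ker R.aug).subtype R.aug
      (isSES_subtype_of_surjective R.aug R.aug_surjective)
  intro n
  induction n with
  | zero =>
      haveI : Module.Finite A (LinearMap.ker R.aug) :=
        Module.Finite.iff_fg.mpr (IsNoetherian.noetherian _)
      haveI : Module.Finite A (LinearMap.ker (kerAugRestrict R)) :=
        Module.Finite.iff_fg.mpr (IsNoetherian.noetherian _)
      have h2 := hasFreeRedCx_of_ker (ModuleCat.of A (LinearMap.ker R.aug)) h1 _ _
        (LinearMap.ker (kerAugRestrict R)).subtype (kerAugRestrict R)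
        (isSES_subtype_of_surjective _ (kerAugRestrict_surjective R))
      exact hasFreeRedCx_congr (LinearEquiv.ofEq _ _ (ker_kerAugRestrict R)) h2
  | succ n ihn =>
      haveI : Module.Finite A (LinearMap.ker (R.d n)) :=
        Module.Finite.iff_fg.mpr (IsNoetherian.noetherian _)
      haveI : Module.Finite A (LinearMap.ker (kerDRestrict R n)) :=
        Module.Finite.iff_fg.mpr (IsNoetherian.noetherian _)
      have h2 := hasFreeRedCx_of_ker (ModuleCat.of A (LinearMap.ker (R.d n))) ihn _ _
        (LinearMap.ker (kerDRestrict R n)).subtype (kerDRestrict R n)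
        (isSES_subtype_of_surjective _ (kerDRestrict_surjective R n))
      exact hasFreeRedCx_congr (LinearEquiv.ofEq _ _ (ker_kerDRestrict R n)) h2

end Main

end ComplexityTest

/-- **Proposition 2.2(i)**: over a local ring, the kernel of a surjection onto a module
of free reducible complexity from a free module again has free reducible complexity;
in particular all syzygies of a module of free reducible complexity have free
reducible complexity. -/
theorem kernel_and_syzygies_of_hasFreeRedCx
    (A : Type u) [CommRing A] [IsLocalRing A] [IsNoetherianRing A]
    (M : Type u) [AddCommGroup M] [Module A M] [Module.Finite A M]
    (hM : HasFreeRedCx A M)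
    (K F : Type u) [AddCommGroup K] [Module A K] [Module.Finite A K]
    [AddCommGroup F] [Module A F] [Module.Finite A F] [Module.Free A F]
    (f : K →ₗ[A] F) (g : F →ₗ[A] M) (hses : IsSES f g) :
    HasFreeRedCx A K ∧
      ∀ (S : Type u) [AddCommGroup S] [Module A S] (i : ℕ),
        IsSyzygyOf A M S i → HasFreeRedCx A S := by
  constructor
  · exact hasFreeRedCx_of_ker (ModuleCat.of A M) hM K F f g hses
  · intro S _ _ i hsyz
    match i, hsyz with
    | 0, ⟨e⟩ => exact hasFreeRedCx_congr e.symm hM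
    | 1, ⟨R, ⟨e⟩⟩ =>
        haveI : Module.Finite A (LinearMap.ker R.aug) :=
          Module.Finite.iff_fg.mpr (IsNoetherian.noetherian _)
        exact hasFreeRedCx_congr e.symm (hasFreeRedCx_of_ker (ModuleCat.of A M) hM _ _
          (LinearMap.ker R.aug).subtype R.aug
          (isSES_subtype_of_surjective R.aug R.aug_surjective))
    | (n + 2), ⟨R, ⟨e⟩⟩ =>
        exact hasFreeRedCx_congr e.symm (frc_ker_d hM R n)
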